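/- A rectangle with width w and height h can be dissected into finitely many squares if and only if w/h is rational. -/

import Mathlib

/-- An axis-parallel box in ℝⁿ with positive side lengths. -/
structure Box (n : ℕ) where
  lower : Fin n → ℝ
  upper : Fin n → ℝ
  lower_lt_upper : ∀ i, lower i < upper i

namespace Box

/-- The closed box as a subset of ℝⁿ. -/
def toSet {n : ℕ} (B : Box n) : Set (Fin n → ℝ) :=
  Set.univ.pi fun i => Set.Icc (B.lower i) (B.upper i)

/-- The open interior of the box. -/
def interiorSet {n : ℕ} (B : Box n) : Set (Fin n → ℝ) :=
  Set.univ.pi fun i => Set.Ioo (B.lower i) (B.upper i)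

/-- The side length of the box in direction `i`. -/
def side {n : ℕ} (B : Box n) (i : Fin n) : ℝ := B.upper i - B.lower i

end Box

/-- The boxes `t` form a finite partition (dissection) of `B`:
pairwise disjoint interiors, and their union covers `B`. -/
def IsDissection {n m : ℕ} (B : Box n) (t : Fin m → Box n) : Prop :=
  (∀ i j, i ≠ j → Disjoint (t i).interiorSet (t j).interiorSet) ∧
  (⋃ i, (t i).toSet) = B.toSet

/-- `P` is cut by a hyperplane parallel to a pair of its faces into `P₁` and `P₂`. -/
def IsSplit {n : ℕ} (P P₁ P₂ : Box n) : Prop :=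
  ∃ (j : Fin n) (c : ℝ), P.lower j < c ∧ c < P.upper j ∧
    P₁.lower = P.lower ∧ P₁.upper = Function.update P.upper j c ∧
    P₂.lower = Function.update P.lower j c ∧ P₂.upper = P.upper


open Finset

noncomputable def adjPairs (X : Finset ℝ) : Finset (ℝ × ℝ) :=
  (X ×ˢ X).filter fun pq => pq.1 < pq.2 ∧ ∀ z ∈ X, ¬(pq.1 < z ∧ z < pq.2)

theorem mem_adjPairs {X : Finset ℝ} {p q : ℝ} :
    (p, q) ∈ adjPairs X ↔ p ∈ X ∧ q ∈ X ∧ p < q ∧ ∀ z ∈ X, ¬(p < z ∧ z < q) := by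
  simp [adjPairs, Finset.mem_filter, Finset.mem_product, and_assoc]

theorem telescope (f : ℝ → ℚ) (X : Finset ℝ) :
    ∀ n (a b : ℝ), a ∈ X → b ∈ X → a ≤ b →
      (X.filter fun z => a < z ∧ z ≤ b).card = n →
      ∑ pq ∈ (adjPairs X).filter (fun pq => a ≤ pq.1 ∧ pq.2 ≤ b), (f pq.2 - f pq.1)
        = f b - f a := by
  intro n
  induction n using Nat.strong_induction_on with
  | _ n ih =>
    intro a b ha hb hab hcard
    rcases eq_or_lt_of_le hab with rfl | hab
    · have he : (adjPairs X).filter (fun pq => a ≤ pq.1 ∧ pq.2 ≤ a) = ∅ := by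
        rw [Finset.filter_eq_empty_iff]
        rintro ⟨p, q⟩ hpq ⟨h1, h2⟩
        have := (mem_adjPairs.mp hpq).2.2.1
        linarith
      simp [he]
    · set S := X.filter (fun z => a < z ∧ z ≤ b) with hS
      have hbS : b ∈ S := Finset.mem_filter.mpr ⟨hb, hab, le_refl b⟩
      have hne : S.Nonempty := ⟨b, hbS⟩
      set c := S.min' hne with hc
      have hcS : c ∈ S := S.min'_mem hne
      have hcX : c ∈ X := (Finset.mem_filter.mp hcS).1
      have hac : a < c := (Finset.mem_filter.mp hcS).2.1
      have hcb : c ≤ b := (Finset.mem_filter.mp hcS).2.2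
      have hmin : ∀ z ∈ X, a < z → z ≤ b → c ≤ z := fun z hz h1 h2 =>
        S.min'_le z (Finset.mem_filter.mpr ⟨hz, h1, h2⟩)
      have hadj : (a, c) ∈ adjPairs X := by
        refine mem_adjPairs.mpr ⟨ha, hcX, hac, fun z hz ⟨h1, h2⟩ => ?_⟩
        exact absurd (hmin z hz h1 (le_trans h2.le hcb)) (not_le.mpr h2)
      have hsplit : (adjPairs X).filter (fun pq => a ≤ pq.1 ∧ pq.2 ≤ b)
          = insert (a, c) ((adjPairs X).filter (fun pq => c ≤ pq.1 ∧ pq.2 ≤ b)) := by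
        ext ⟨p, q⟩
        simp only [Finset.mem_filter, Finset.mem_insert, Prod.mk.injEq]
        constructor
        · rintro ⟨hm, h1, h2⟩
          obtain ⟨hpX, hqX, hpq, hbetw⟩ := mem_adjPairs.mp hm
          rcases eq_or_lt_of_le h1 with rfl | h1'
          · left
            refine ⟨rfl, ?_⟩
            have hqc : c ≤ q := hmin q hqX hpq h2
            rcases eq_or_lt_of_le hqc with rfl | h'
            · rfl
            · exact absurd ⟨hac, h'⟩ (hbetw c hcX)
          · right
            exact ⟨hm, hmin p hpX h1' (le_trans hpq.le h2), h2⟩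
        · rintro (⟨rfl, rfl⟩ | ⟨hm, h1, h2⟩)
          · exact ⟨hadj, le_refl _, hcb⟩
          · exact ⟨hm, le_trans hac.le h1, h2⟩
      have hnotmem : (a, c) ∉ (adjPairs X).filter (fun pq => c ≤ pq.1 ∧ pq.2 ≤ b) := by
        intro hmem
        have := (Finset.mem_filter.mp hmem).2.1
        simp only at this
        linarith
      rw [hsplit, Finset.sum_insert hnotmem]
      have hsub : X.filter (fun z => c < z ∧ z ≤ b) ⊂ S := by
        constructor
        · intro z hz
          obtain ⟨h1, h2, h3⟩ := Finset.mem_filter.mp hz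
          exact Finset.mem_filter.mpr ⟨h1, lt_trans hac h2, h3⟩
        · intro hcon
          have := Finset.mem_filter.mp (hcon hcS)
          exact absurd this.2.1 (lt_irrefl c)
      have hlt : (X.filter (fun z => c < z ∧ z ≤ b)).card < n :=
        hcard ▸ Finset.card_lt_card hsub
      rw [ih _ hlt c b hcX hb hcb rfl]
      ring

theorem corner_lower_mem {n : ℕ} (C : Box n) : C.lower ∈ C.toSet := by
  intro j _
  exact ⟨le_refl _, (C.lower_lt_upper j).le⟩

theorem corner_upper_mem {n : ℕ} (C : Box n) : C.upper ∈ C.toSet := by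
  intro j _
  exact ⟨(C.lower_lt_upper j).le, le_refl _⟩

theorem mem_toSet {n : ℕ} {C : Box n} {x : Fin n → ℝ} :
    x ∈ C.toSet ↔ ∀ j, C.lower j ≤ x j ∧ x j ≤ C.upper j := by
  simp [Box.toSet, Set.mem_pi, Set.mem_Icc, Pi.le_def, forall_and]

theorem mem_interiorSet {n : ℕ} {C : Box n} {x : Fin n → ℝ} :
    x ∈ C.interiorSet ↔ ∀ j, C.lower j < x j ∧ x j < C.upper j := by
  simp [Box.interiorSet, Set.mem_pi, Set.mem_Ioo]

theorem key_sum (B : Box 2) (m : ℕ) (t : Fin m → Box 2)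
    (hdisj : ∀ i j, i ≠ j → Disjoint (t i).interiorSet (t j).interiorSet)
    (hcover : (⋃ i, (t i).toSet) = B.toSet)
    (f : ℝ → ℚ) (hf : ∀ x y, f (x + y) = f x + f y) :
    ∑ i, f ((t i).side 0) * f ((t i).side 1) = f (B.side 0) * f (B.side 1) := by
  classical
  have hf0 : f 0 = 0 := by have := hf 0 0; simpa using this
  have fsub : ∀ a b : ℝ, f (b - a) = f b - f a := by
    intro a b
    have := hf (b - a) a
    rw [sub_add_cancel] at this
    linarith
  -- the grid coordinate sets
  set X : Finset ℝ := (Finset.image (fun i => (t i).lower 0) Finset.univ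
      ∪ Finset.image (fun i => (t i).upper 0) Finset.univ)
      ∪ {B.lower 0, B.upper 0} with hX
  set Y : Finset ℝ := (Finset.image (fun i => (t i).lower 1) Finset.univ
      ∪ Finset.image (fun i => (t i).upper 1) Finset.univ)
      ∪ {B.lower 1, B.upper 1} with hY
  have hlX : ∀ i, (t i).lower 0 ∈ X := by
    intro i; simp [hX]
  have huX : ∀ i, (t i).upper 0 ∈ X := by
    intro i; simp [hX]
  have hlY : ∀ i, (t i).lower 1 ∈ Y := by
    intro i; simp [hY]
  have huY : ∀ i, (t i).upper 1 ∈ Y := by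
    intro i; simp [hY]
  have hBlX : B.lower 0 ∈ X := by simp [hX]
  have hBuX : B.upper 0 ∈ X := by simp [hX]
  have hBlY : B.lower 1 ∈ Y := by simp [hY]
  have hBuY : B.upper 1 ∈ Y := by simp [hY]
  -- each tile is inside B
  have hsub : ∀ i, (t i).toSet ⊆ B.toSet := by
    intro i
    rw [← hcover]
    exact Set.subset_iUnion (fun i => (t i).toSet) i
  have hlb : ∀ i j, B.lower j ≤ (t i).lower j ∧ (t i).lower j ≤ B.upper j := by
    intro i j
    exact mem_toSet.mp (hsub i (corner_lower_mem (t i))) j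
  have hub : ∀ i j, B.lower j ≤ (t i).upper j ∧ (t i).upper j ≤ B.upper j := by
    intro i j
    exact mem_toSet.mp (hsub i (corner_upper_mem (t i))) j
  have hXbd : ∀ x ∈ X, B.lower 0 ≤ x ∧ x ≤ B.upper 0 := by
    intro x hx
    simp only [hX, Finset.mem_union, Finset.mem_image, Finset.mem_univ, true_and,
      Finset.mem_insert, Finset.mem_singleton] at hx
    rcases hx with (⟨i, rfl⟩ | ⟨i, rfl⟩) | (rfl | rfl)
    · exact hlb i 0
    · exact hub i 0
    · exact ⟨le_refl _, (B.lower_lt_upper 0).le⟩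
    · exact ⟨(B.lower_lt_upper 0).le, le_refl _⟩
  have hYbd : ∀ y ∈ Y, B.lower 1 ≤ y ∧ y ≤ B.upper 1 := by
    intro y hy
    simp only [hY, Finset.mem_union, Finset.mem_image, Finset.mem_univ, true_and,
      Finset.mem_insert, Finset.mem_singleton] at hy
    rcases hy with (⟨i, rfl⟩ | ⟨i, rfl⟩) | (rfl | rfl)
    · exact hlb i 1
    · exact hub i 1
    · exact ⟨le_refl _, (B.lower_lt_upper 1).le⟩
    · exact ⟨(B.lower_lt_upper 1).le, le_refl _⟩
  set cells : Finset ((ℝ × ℝ) × (ℝ × ℝ)) := adjPairs X ×ˢ adjPairs Y with hcells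
  set v : (ℝ × ℝ) × (ℝ × ℝ) → ℚ := fun c => (f c.1.2 - f c.1.1) * (f c.2.2 - f c.2.1) with hv
  set inside : Fin m → (ℝ × ℝ) × (ℝ × ℝ) → Prop := fun i c =>
    ((t i).lower 0 ≤ c.1.1 ∧ c.1.2 ≤ (t i).upper 0) ∧
    ((t i).lower 1 ≤ c.2.1 ∧ c.2.2 ≤ (t i).upper 1) with hinside
  -- per-tile decomposition
  have step1 : ∀ i, f ((t i).side 0) * f ((t i).side 1)
      = ∑ c ∈ cells.filter (inside i), v c := by
    intro i
    have h0 : f ((t i).side 0) =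
        ∑ pq ∈ (adjPairs X).filter (fun pq => (t i).lower 0 ≤ pq.1 ∧ pq.2 ≤ (t i).upper 0),
          (f pq.2 - f pq.1) := by
      rw [Box.side, fsub, telescope f X _ _ _ (hlX i) (huX i) ((t i).lower_lt_upper 0).le rfl]
    have h1 : f ((t i).side 1) =
        ∑ pq ∈ (adjPairs Y).filter (fun pq => (t i).lower 1 ≤ pq.1 ∧ pq.2 ≤ (t i).upper 1),
          (f pq.2 - f pq.1) := by
      rw [Box.side, fsub, telescope f Y _ _ _ (hlY i) (huY i) ((t i).lower_lt_upper 1).le rfl]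
    have hfilter : cells.filter (inside i)
        = (adjPairs X).filter (fun pq => (t i).lower 0 ≤ pq.1 ∧ pq.2 ≤ (t i).upper 0)
          ×ˢ (adjPairs Y).filter (fun rs => (t i).lower 1 ≤ rs.1 ∧ rs.2 ≤ (t i).upper 1) := by
      ext ⟨u, w⟩
      simp only [hcells, hinside, Finset.mem_filter, Finset.mem_product]
      tauto
    rw [hfilter, h0, h1, Finset.sum_mul_sum, Finset.sum_product]
  -- each cell lies in exactly one tile
  have huniq : ∀ c ∈ cells, ∃ i, inside i c ∧ ∀ j, inside j c → j = i := by
    rintro ⟨⟨p, q⟩, r, s⟩ hc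
    rw [hcells, Finset.mem_product] at hc
    obtain ⟨hpq, hrs⟩ := hc
    obtain ⟨hpX, hqX, hpltq, hbetwX⟩ := mem_adjPairs.mp hpq
    obtain ⟨hrY, hsY, hrlts, hbetwY⟩ := mem_adjPairs.mp hrs
    set z : Fin 2 → ℝ := ![(p + q) / 2, (r + s) / 2] with hz
    have hz0 : z 0 = (p + q) / 2 := rfl
    have hz1 : z 1 = (r + s) / 2 := rfl
    have hzB : z ∈ B.toSet := by
      rw [mem_toSet]
      intro j
      fin_cases j
      · constructor
        · calc B.lower 0 ≤ p := (hXbd p hpX).1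
            _ ≤ z 0 := by rw [hz0]; linarith
        · calc z 0 ≤ q := by rw [hz0]; linarith
            _ ≤ B.upper 0 := (hXbd q hqX).2
      · constructor
        · calc B.lower 1 ≤ r := (hYbd r hrY).1
            _ ≤ z 1 := by rw [hz1]; linarith
        · calc z 1 ≤ s := by rw [hz1]; linarith
            _ ≤ B.upper 1 := (hYbd s hsY).2
    rw [← hcover] at hzB
    obtain ⟨_, ⟨i, rfl⟩, hzi⟩ := hzB
    have hins : inside i ((p, q), (r, s)) := by
      have h0 := mem_toSet.mp hzi 0
      have h1 := mem_toSet.mp hzi 1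
      refine ⟨⟨?_, ?_⟩, ?_, ?_⟩
      · by_contra hcon
        push_neg at hcon
        exact hbetwX _ (hlX i) ⟨hcon, by rw [hz0] at h0; linarith [h0.1]⟩ |>.elim
      · by_contra hcon
        push_neg at hcon
        exact hbetwX _ (huX i) ⟨by rw [hz0] at h0; linarith [h0.2], hcon⟩ |>.elim
      · by_contra hcon
        push_neg at hcon
        exact hbetwY _ (hlY i) ⟨hcon, by rw [hz1] at h1; linarith [h1.1]⟩ |>.elim
      · by_contra hcon
        push_neg at hcon
        exact hbetwY _ (huY i) ⟨by rw [hz1] at h1; linarith [h1.2], hcon⟩ |>.elim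
    refine ⟨i, hins, fun j hj => ?_⟩
    by_contra hne
    have hzj : z ∈ (t j).interiorSet := by
      rw [mem_interiorSet]
      intro k
      obtain ⟨⟨a1, a2⟩, a3, a4⟩ := hj
      fin_cases k
      · exact ⟨by show (t j).lower 0 < z 0; rw [hz0]; linarith,
          by show z 0 < (t j).upper 0; rw [hz0]; linarith⟩
      · exact ⟨by show (t j).lower 1 < z 1; rw [hz1]; linarith,
          by show z 1 < (t j).upper 1; rw [hz1]; linarith⟩
    have hzi' : z ∈ (t i).interiorSet := by
      rw [mem_interiorSet]
      intro k
      obtain ⟨⟨a1, a2⟩, a3, a4⟩ := hins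
      fin_cases k
      · exact ⟨by show (t i).lower 0 < z 0; rw [hz0]; linarith,
          by show z 0 < (t i).upper 0; rw [hz0]; linarith⟩
      · exact ⟨by show (t i).lower 1 < z 1; rw [hz1]; linarith,
          by show z 1 < (t i).upper 1; rw [hz1]; linarith⟩
    exact Set.disjoint_left.mp (hdisj j i hne) hzj hzi'
  -- swap the double sum
  calc ∑ i, f ((t i).side 0) * f ((t i).side 1)
      = ∑ i, ∑ c ∈ cells.filter (inside i), v c := by
        exact Finset.sum_congr rfl fun i _ => step1 i
    _ = ∑ i, ∑ c ∈ cells, if inside i c then v c else 0 := by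
        exact Finset.sum_congr rfl fun i _ => (Finset.sum_filter _ _)
    _ = ∑ c ∈ cells, ∑ i, if inside i c then v c else 0 := Finset.sum_comm
    _ = ∑ c ∈ cells, v c := by
        refine Finset.sum_congr rfl fun c hc => ?_
        obtain ⟨i, hi, huni⟩ := huniq c hc
        rw [Finset.sum_eq_single i
          (fun j _ hji => if_neg (fun hcon => hji (huni j hcon)))
          (fun hcon => absurd (Finset.mem_univ i) hcon), if_pos hi]
    _ = (∑ pq ∈ adjPairs X, (f pq.2 - f pq.1)) * (∑ rs ∈ adjPairs Y, (f rs.2 - f rs.1)) := by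
        rw [Finset.sum_mul_sum, hcells, Finset.sum_product]
    _ = f (B.side 0) * f (B.side 1) := by
        have e1 : (adjPairs X).filter (fun pq => B.lower 0 ≤ pq.1 ∧ pq.2 ≤ B.upper 0)
            = adjPairs X := by
          refine Finset.filter_true_of_mem fun pq hpq => ?_
          obtain ⟨h1, h2, _, _⟩ := mem_adjPairs.mp (show (pq.1, pq.2) ∈ adjPairs X from hpq)
          exact ⟨(hXbd _ h1).1, (hXbd _ h2).2⟩
        have e2 : (adjPairs Y).filter (fun rs => B.lower 1 ≤ rs.1 ∧ rs.2 ≤ B.upper 1)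
            = adjPairs Y := by
          refine Finset.filter_true_of_mem fun rs hrs => ?_
          obtain ⟨h1, h2, _, _⟩ := mem_adjPairs.mp (show (rs.1, rs.2) ∈ adjPairs Y from hrs)
          exact ⟨(hYbd _ h1).1, (hYbd _ h2).2⟩
        rw [← e1, ← e2,
          telescope f X _ _ _ hBlX hBuX (B.lower_lt_upper 0).le rfl,
          telescope f Y _ _ _ hBlY hBuY (B.lower_lt_upper 1).le rfl,
          Box.side, Box.side, fsub, fsub]

theorem exists_additive_fun (w h : ℝ) (hh : h ≠ 0) (hirr : ∀ q : ℚ, w / h ≠ (q : ℝ)) :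
    ∃ f : ℝ → ℚ, (∀ x y, f (x + y) = f x + f y) ∧ f h = 1 ∧ f w = -1 := by
  have hhw : h ≠ w := by
    intro hcon
    exact hirr 1 (by rw [← hcon]; simp [div_self hh])
  have hli : LinearIndependent ℚ ![h, w] := by
    rw [LinearIndependent.pair_iff' hh]
    intro a ha
    apply hirr a
    rw [← ha]
    rw [Rat.smul_def]
    field_simp
  have hsub : LinearIndepOn ℚ id (Set.range ![h, w]) :=
    (linearIndepOn_id_range_iff hli.injective).mpr hli
  set b := Module.Basis.extend hsub with hb
  have hhm : h ∈ hsub.extend (Set.subset_univ _) :=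
    hsub.subset_extend _ ⟨0, rfl⟩
  have hwm : w ∈ hsub.extend (Set.subset_univ _) :=
    hsub.subset_extend _ ⟨1, rfl⟩
  have e1 : b.repr h = Finsupp.single ⟨h, hhm⟩ 1 := by
    calc b.repr h = b.repr (b ⟨h, hhm⟩) := by rw [Module.Basis.extend_apply_self]
      _ = Finsupp.single ⟨h, hhm⟩ 1 := b.repr_self _
  have e2 : b.repr w = Finsupp.single ⟨w, hwm⟩ 1 := by
    calc b.repr w = b.repr (b ⟨w, hwm⟩) := by rw [Module.Basis.extend_apply_self]
      _ = Finsupp.single ⟨w, hwm⟩ 1 := b.repr_self _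
  refine ⟨fun x => b.repr x ⟨h, hhm⟩ - b.repr x ⟨w, hwm⟩, fun x y => by
    simp only [map_add, Finsupp.add_apply]; ring, ?_, ?_⟩
  · show b.repr h ⟨h, hhm⟩ - b.repr h ⟨w, hwm⟩ = 1
    rw [e1, Finsupp.single_apply, Finsupp.single_apply,
      if_pos rfl, if_neg (by simp [hhw])]
    norm_num
  · show b.repr w ⟨h, hhm⟩ - b.repr w ⟨w, hwm⟩ = -1
    rw [e2, Finsupp.single_apply, Finsupp.single_apply,
      if_neg (by simp [hhw.symm]), if_pos rfl]
    norm_num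

theorem cell_disj {s : ℝ} (hs : 0 < s) {n m : ℕ} (hnm : n ≠ m) {x : ℝ}
    (h1 : (n : ℝ) * s < x) (h2 : x < ((n + 1 : ℕ) : ℝ) * s)
    (h3 : (m : ℝ) * s < x) (h4 : x < ((m + 1 : ℕ) : ℝ) * s) : False := by
  rcases hnm.lt_or_gt with hl | hl
  · have hle : ((n + 1 : ℕ) : ℝ) ≤ (m : ℝ) := Nat.cast_le.mpr hl
    nlinarith
  · have hle : ((m + 1 : ℕ) : ℝ) ≤ (n : ℝ) := Nat.cast_le.mpr hl
    nlinarith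

theorem find_cell {s : ℝ} (hs : 0 < s) {a : ℕ} (ha : 0 < a) {x : ℝ}
    (hx0 : 0 ≤ x) (hxa : x ≤ (a : ℝ) * s) :
    ∃ i0 : ℕ, i0 + 1 ≤ a ∧ ((i0 : ℕ) : ℝ) * s ≤ x ∧ x ≤ ((i0 + 1 : ℕ) : ℝ) * s := by
  have hxs : 0 ≤ x / s := div_nonneg hx0 hs.le
  set n : ℕ := ⌊x / s⌋.toNat with hn
  have hfl : (0:ℤ) ≤ ⌊x / s⌋ := Int.floor_nonneg.mpr hxs
  have hnc : ((n : ℕ) : ℝ) = (⌊x / s⌋ : ℝ) := by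
    rw [hn]
    exact_mod_cast congrArg (Int.cast : ℤ → ℝ) (Int.toNat_of_nonneg hfl)
  refine ⟨min n (a - 1), by omega, ?_, ?_⟩
  · have h1 : ((min n (a - 1) : ℕ) : ℝ) ≤ ((n : ℕ) : ℝ) := Nat.cast_le.mpr (min_le_left _ _)
    have h2 : (⌊x / s⌋ : ℝ) ≤ x / s := Int.floor_le _
    have h3 : ((min n (a - 1) : ℕ) : ℝ) * s ≤ (x / s) * s := by
      apply mul_le_mul_of_nonneg_right _ hs.le
      rw [hnc] at h1
      linarith
    rwa [div_mul_cancel₀ x hs.ne'] at h3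
  · rcases le_or_gt n (a - 1) with hle | hlt
    · rw [min_eq_left hle]
      have h2 : x / s < (⌊x / s⌋ : ℝ) + 1 := Int.lt_floor_add_one _
      have h3 : x / s < ((n + 1 : ℕ) : ℝ) := by
        push_cast
        rw [hnc]
        linarith
      have h4 : (x / s) * s ≤ ((n + 1 : ℕ) : ℝ) * s :=
        mul_le_mul_of_nonneg_right h3.le hs.le
      rwa [div_mul_cancel₀ x hs.ne'] at h4
    · rw [min_eq_right hlt.le]
      have : ((a - 1 + 1 : ℕ) : ℝ) = (a : ℝ) := by
        congr 1
        omega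
      rw [this]
      exact hxa


theorem dehn_rectangle_into_squares (w h : ℝ) (hw : 0 < w) (hh : 0 < h) :
    (∀ B : Box 2, B.lower = ![0, 0] → B.upper = ![w, h] →
      ∃ (m : ℕ) (t : Fin m → Box 2), IsDissection B t ∧
        ∀ i, (t i).side 0 = (t i).side 1) ↔
    ∃ q : ℚ, w / h = (q : ℝ) := by
  constructor
  · intro hyp
    by_contra hcon
    push_neg at hcon
    obtain ⟨f, hadd, hfh, hfw⟩ := exists_additive_fun w h hh.ne' hcon
    have hBlt : ∀ i : Fin 2, (![0, 0] : Fin 2 → ℝ) i < ![w, h] i := by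
      intro i; fin_cases i <;> simpa using by assumption
    obtain ⟨m, t, ⟨hdisj, hcover⟩, hsq⟩ := hyp ⟨![0, 0], ![w, h], hBlt⟩ rfl rfl
    have hk := key_sum ⟨![0, 0], ![w, h], hBlt⟩ m t hdisj hcover f hadd
    have hs0 : Box.side ⟨![0, 0], ![w, h], hBlt⟩ 0 = w := by simp [Box.side]
    have hs1 : Box.side ⟨![0, 0], ![w, h], hBlt⟩ 1 = h := by simp [Box.side]
    rw [hs0, hs1, hfw, hfh] at hk
    have hnn : 0 ≤ ∑ i, f ((t i).side 0) * f ((t i).side 1) :=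
      Finset.sum_nonneg fun i _ => by rw [hsq i]; exact mul_self_nonneg _
    rw [hk] at hnn
    norm_num at hnn
  · rintro ⟨q, hq⟩ B hBl hBu
    have hq0 : 0 < (q : ℝ) := hq ▸ div_pos hw hh
    have hqq : 0 < q := by exact_mod_cast hq0
    have hnum : 0 < q.num := Rat.num_pos.mpr hqq
    set a : ℕ := q.num.toNat with hadef
    set bb : ℕ := q.den with hbdef
    have ha : 0 < a := by omega
    have hb : 0 < bb := q.pos
    have ha' : (0:ℝ) < a := by exact_mod_cast ha
    have hb' : (0:ℝ) < bb := by exact_mod_cast hb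
    have hcast : (q : ℝ) = (a : ℝ) / (bb : ℝ) := by
      rw [Rat.cast_def]
      congr 1
      exact_mod_cast (Int.toNat_of_nonneg hnum.le).symm
    set s : ℝ := w / a with hsdef
    have hs : 0 < s := div_pos hw ha'
    have hws : (a : ℝ) * s = w := by
      rw [hsdef]
      field_simp
    have hwqh : w = (q : ℝ) * h := (div_eq_iff hh.ne').mp hq
    have hkey : w * bb = a * h := by
      rw [hwqh, hcast]; field_simp
    have hhs : (bb : ℝ) * s = h := by
      rw [hsdef]; rw [div_eq_iff hh.ne'] at hq
      field_simp
      nlinarith [hkey]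
    -- the tiles
    refine ⟨a * bb, fun k => ⟨![((k.val / bb : ℕ) : ℝ) * s, ((k.val % bb : ℕ) : ℝ) * s],
        ![(((k.val / bb : ℕ) + 1 : ℕ) : ℝ) * s, (((k.val % bb : ℕ) + 1 : ℕ) : ℝ) * s],
        ?_⟩, ⟨?_, ?_⟩, ?_⟩
    · rw [Fin.forall_fin_two]
      constructor <;>
        · simp only [Matrix.cons_val_zero, Matrix.cons_val_one, Matrix.head_cons]
          push_cast
          nlinarith [hs]
    · -- disjoint interiors
      intro k k' hkk'
      rw [Set.disjoint_left]
      intro x hx hx'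
      have m1 := mem_interiorSet.mp hx 0
      have m2 := mem_interiorSet.mp hx 1
      have m1' := mem_interiorSet.mp hx' 0
      have m2' := mem_interiorSet.mp hx' 1
      simp only [Matrix.cons_val_zero, Matrix.cons_val_one, Matrix.head_cons] at m1 m2 m1' m2'
      have hne : k.val / bb ≠ k'.val / bb ∨ k.val % bb ≠ k'.val % bb := by
        by_contra hcc
        push_neg at hcc
        apply hkk'
        apply Fin.ext
        rw [← Nat.div_add_mod k.val bb, ← Nat.div_add_mod k'.val bb, hcc.1, hcc.2]
      rcases hne with hne | hne
      · exact cell_disj hs hne m1.1 m1.2 m1'.1 m1'.2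
      · exact cell_disj hs hne m2.1 m2.2 m2'.1 m2'.2
    · -- cover
      apply Set.eq_of_subset_of_subset
      · -- each tile inside B
        rw [Set.iUnion_subset_iff]
        intro k x hx
        have m1 := mem_toSet.mp hx 0
        have m2 := mem_toSet.mp hx 1
        simp only [Matrix.cons_val_zero, Matrix.cons_val_one, Matrix.head_cons] at m1 m2
        have hd : k.val / bb < a := by
          rw [Nat.div_lt_iff_lt_mul hb]
          exact k.isLt
        have hm : k.val % bb < bb := Nat.mod_lt _ hb
        rw [mem_toSet, Fin.forall_fin_two, hBl, hBu]
        simp only [Matrix.cons_val_zero, Matrix.cons_val_one, Matrix.head_cons]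
        constructor
        · constructor
          · have : (0:ℝ) ≤ ((k.val / bb : ℕ) : ℝ) * s := by positivity
            linarith [m1.1]
          · have h1 : (((k.val / bb : ℕ) + 1 : ℕ) : ℝ) ≤ (a : ℝ) := by
              exact_mod_cast hd
            have : (((k.val / bb : ℕ) + 1 : ℕ) : ℝ) * s ≤ (a : ℝ) * s :=
              mul_le_mul_of_nonneg_right h1 hs.le
            linarith [m1.2, hws]
        · constructor
          · have : (0:ℝ) ≤ ((k.val % bb : ℕ) : ℝ) * s := by positivity
            linarith [m2.1]
          · have h1 : (((k.val % bb : ℕ) + 1 : ℕ) : ℝ) ≤ (bb : ℝ) := by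
              exact_mod_cast hm
            have : (((k.val % bb : ℕ) + 1 : ℕ) : ℝ) * s ≤ (bb : ℝ) * s :=
              mul_le_mul_of_nonneg_right h1 hs.le
            linarith [m2.2, hhs]
      · -- B covered by tiles
        intro x hx
        have m1 := mem_toSet.mp hx 0
        have m2 := mem_toSet.mp hx 1
        rw [hBl, hBu] at m1 m2
        simp only [Matrix.cons_val_zero, Matrix.cons_val_one, Matrix.head_cons] at m1 m2
        obtain ⟨i0, hi0a, hi0l, hi0u⟩ := find_cell hs ha m1.1 (by rw [hws]; exact m1.2)
        obtain ⟨j0, hj0b, hj0l, hj0u⟩ := find_cell hs hb m2.1 (by rw [hhs]; exact m2.2)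
        have hklt : bb * i0 + j0 < a * bb := by
          calc bb * i0 + j0 < bb * i0 + bb := by omega
            _ = bb * (i0 + 1) := by ring
            _ ≤ bb * a := Nat.mul_le_mul_left bb hi0a
            _ = a * bb := Nat.mul_comm bb a
        refine Set.mem_iUnion.mpr ⟨⟨bb * i0 + j0, hklt⟩, ?_⟩
        have hdiv : (bb * i0 + j0) / bb = i0 := by
          rw [Nat.mul_add_div hb, Nat.div_eq_of_lt hj0b]
          omega
        have hmod : (bb * i0 + j0) % bb = j0 := by
          rw [Nat.mul_add_mod]
          exact Nat.mod_eq_of_lt hj0b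
        rw [mem_toSet, Fin.forall_fin_two]
        simp only [Matrix.cons_val_zero, Matrix.cons_val_one, Matrix.head_cons, hdiv, hmod]
        exact ⟨⟨hi0l, hi0u⟩, ⟨hj0l, hj0u⟩⟩
    · -- squares
      intro k
      simp only [Box.side, Matrix.cons_val_zero, Matrix.cons_val_one, Matrix.head_cons]
      push_cast
      ring
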